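/- For any sequence of complex numbers (c_k) and the Walsh functions, ∑_{j=1}^{q} D_j = q·K_q where K_q is the Fejér kernel; moreover for q = q_{A−1} = ∑_{j=0}^{A−1} 4^j and M_j = 2^j, the L^{1/2} quasi-norm satisfies ∫_G |q_{A−1} K_{q_{A−1}}|^{1/2} dμ ≥ c·A for an absolute constant c > 0 and all A ≥ 5, given the pointwise lower bound q_{A−1}|K_{q_{A−1}}(x)| ≥ 4^{k+s}/4 on the set I_{2s+1}(e_{2k} + e_{2s}) of measure 2^{−(2s+1)}, for 0 ≤ k ≤ A−3 and k+2 ≤ s ≤ A−1. -/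

import Mathlib

open MeasureTheory Filter
open scoped ENNReal NNReal
noncomputable section

instance : TopologicalSpace (ZMod 2) := ⊥
instance : DiscreteTopology (ZMod 2) := ⟨rfl⟩

/-- The dyadic group `G = ∏_{k=0}^∞ ℤ/2ℤ`. -/
abbrev G : Type := ℕ → ZMod 2

instance : MeasurableSpace G := borel G
instance : BorelSpace G := ⟨rfl⟩

/-- The normalized Haar measure on the dyadic group. -/
def μG : Measure G := Measure.addHaarMeasure ⊤

/-- The Walsh–Paley functions `w_n(x) = ∏_k ((-1)^{x_k})^{n_k}`. -/
def walsh (n : ℕ) (x : G) : ℝ :=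
  ∏ k ∈ Finset.range (n + 1), if n.testBit k then (-1 : ℝ) ^ ((x k).val) else 1

/-- The Walsh–Dirichlet kernel `D_n = ∑_{k<n} w_k`. -/
def dirichlet (n : ℕ) (x : G) : ℝ := ∑ k ∈ Finset.range n, walsh k x

/-- The Walsh–Fejér kernel `K_n = (1/n) ∑_{k=1}^n D_k`. -/
def fejer (n : ℕ) (x : G) : ℝ :=
  (n : ℝ)⁻¹ * ∑ k ∈ Finset.range n, dirichlet (k + 1) x

/-- The Walsh–Fourier coefficients. -/
def walshCoeff (f : G → ℝ) (k : ℕ) : ℝ := ∫ x, f x * walsh k x ∂μG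

/-- The partial sums of the Walsh–Fourier series. -/
def partialSum (f : G → ℝ) (m : ℕ) (x : G) : ℝ :=
  ∑ k ∈ Finset.range m, walshCoeff f k * walsh k x

/-- The Walsh–Fejér means `σ_m f = (1/m) ∑_{k=1}^m S_k f`. -/
def fejerMean (f : G → ℝ) (m : ℕ) (x : G) : ℝ :=
  (m : ℝ)⁻¹ * ∑ k ∈ Finset.range m, partialSum f (k + 1) x

/-- `e_n ∈ G`: 1 in coordinate `n`, 0 elsewhere. -/
def eVec (n : ℕ) : G := fun i => if i = n then 1 else 0

/-- The cylinder `I_n(y) = {x : x_i = y_i for i < n}`. -/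
def cyl (n : ℕ) (y : G) : Set G := {x | ∀ i < n, x i = y i}


section Aux

lemma isOpen_cyl (n : ℕ) (y : G) : IsOpen (cyl n y) := by
  have : cyl n y = ⋂ i ∈ Finset.range n, (fun x : G => x i) ⁻¹' {y i} := by
    ext x; simp [cyl]
  rw [this]
  exact isOpen_biInter_finset fun i _ =>
    (continuous_apply i).isOpen_preimage _ (isOpen_discrete _)

lemma measurableSet_cyl (n : ℕ) (y : G) : MeasurableSet (cyl n y) :=
  (isOpen_cyl n y).measurableSet

instance : μG.IsAddHaarMeasure := Measure.isAddHaarMeasure_addHaarMeasure ⊤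

lemma measure_cyl_eq (n : ℕ) (y : G) : μG (cyl n y) = μG (cyl n (0 : G)) := by
  have h : (fun x : G => y + x) ⁻¹' cyl n (0 : G) = cyl n y := by
    ext x
    have key : ∀ a b : ZMod 2, a + b = 0 ↔ b = a := by decide
    simp only [cyl, Set.mem_preimage, Set.mem_setOf_eq, Pi.add_apply, Pi.zero_apply]
    exact forall₂_congr fun i _ => key (y i) (x i)
  rw [← h, measure_preimage_add]

lemma measure_cyl_zero : ∀ n : ℕ, μG (cyl n (0 : G)) = 2⁻¹ ^ n := by
  have base : μG (cyl 0 (0 : G)) = 1 := by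
    have h0 : cyl 0 (0 : G) = Set.univ := by ext x; simp [cyl]
    have := Measure.addHaarMeasure_self (K₀ := (⊤ : TopologicalSpace.PositiveCompacts G))
    rw [h0]
    simpa [μG] using this
  have step : ∀ n : ℕ, μG (cyl n (0 : G)) = 2 * μG (cyl (n+1) (0 : G)) := by
    intro n
    have hsplit : cyl n (0 : G) = cyl (n+1) (0 : G) ∪ cyl (n+1) (eVec n) := by
      ext x
      constructor
      · intro hx
        have hcase : x n = 0 ∨ x n = 1 := by
          have : ∀ a : ZMod 2, a = 0 ∨ a = 1 := by decide
          exact this (x n)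
        rcases hcase with h | h
        · left; intro i hi
          rcases Nat.lt_succ_iff_lt_or_eq.mp hi with hi' | hi'
          · simpa using hx i hi'
          · simp [hi', h]
        · right; intro i hi
          rcases Nat.lt_succ_iff_lt_or_eq.mp hi with hi' | hi'
          · have := hx i hi'
            simp only [Pi.zero_apply] at this
            simp [eVec, this, Nat.ne_of_lt hi']
          · simp [eVec, hi', h]
      · rintro (hx | hx) i hi
        · simpa using hx i (Nat.lt_succ_of_lt hi)
        · have := hx i (Nat.lt_succ_of_lt hi)
          simpa [eVec, Nat.ne_of_lt hi] using this
    have hdisj : Disjoint (cyl (n+1) (0 : G)) (cyl (n+1) (eVec n)) := by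
      rw [Set.disjoint_left]
      intro x hx hx'
      have h1 := hx n (Nat.lt_succ_self n)
      have h2 := hx' n (Nat.lt_succ_self n)
      simp [eVec] at h1 h2
      rw [h1] at h2
      exact (by decide : (0 : ZMod 2) ≠ 1) h2
    rw [hsplit, measure_union hdisj (measurableSet_cyl _ _), measure_cyl_eq (n+1) (eVec n),
      two_mul]
  intro n
  induction n with
  | zero => simpa using base
  | succ n ih =>
    have h := step n
    rw [ih] at h
    have : (2 : ℝ≥0∞)⁻¹ * ((2:ℝ≥0∞)⁻¹ ^ n) = 2⁻¹ * (2 * μG (cyl (n+1) (0:G))) := by rw [← h]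
    rw [← mul_assoc, ENNReal.inv_mul_cancel two_ne_zero ENNReal.ofNat_ne_top, one_mul] at this
    rw [← this, pow_succ, mul_comm]

lemma measure_cyl (n : ℕ) (y : G) : μG (cyl n y) = 2⁻¹ ^ n := by
  rw [measure_cyl_eq, measure_cyl_zero]

end Aux

/-- `∑_{j=1}^q D_j = q K_q`, and the integrated lower bound
`∫ |q_{A−1} K_{q_{A−1}}|^{1/2} dμ ≥ c·A` under the pointwise Blahota–Gát–Goginava bound. -/
theorem fejer_kernel_half_norm_lower_bound :
    (∀ (q : ℕ) (x : G), (∑ j ∈ Finset.Icc 1 q, dirichlet j x) = (q : ℝ) * fejer q x) ∧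
    ∃ c : ℝ, 0 < c ∧ ∀ A : ℕ, 5 ≤ A →
      (∀ k s : ℕ, k ≤ A - 3 → k + 2 ≤ s → s ≤ A - 1 →
        ∀ x ∈ cyl (2 * s + 1) (eVec (2 * k) + eVec (2 * s)),
          (4 : ℝ) ^ (k + s) / 4 ≤
            (∑ j ∈ Finset.range A, 4 ^ j : ℕ) * |fejer (∑ j ∈ Finset.range A, 4 ^ j) x|) →
      ENNReal.ofReal (c * A) ≤
        ∫⁻ x, ENNReal.ofReal (Real.sqrt
          ((∑ j ∈ Finset.range A, 4 ^ j : ℕ) *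
            |fejer (∑ j ∈ Finset.range A, 4 ^ j) x|)) ∂μG := by
  constructor
  · intro q x
    rcases Nat.eq_zero_or_pos q with hq | hq
    · subst hq; simp
    · rw [fejer, ← mul_assoc, mul_inv_cancel₀ (by exact_mod_cast hq.ne' : (q:ℝ) ≠ 0), one_mul]
      rw [← Finset.Ico_add_one_right_eq_Icc, Finset.sum_Ico_eq_sum_range]
      simp [add_comm]
  · refine ⟨1/32, by norm_num, fun A hA h => ?_⟩
    set q : ℕ := ∑ j ∈ Finset.range A, 4 ^ j with hqdef
    set f : G → ℝ≥0∞ := fun x => ENNReal.ofReal (Real.sqrt ((q : ℝ) * |fejer q x|)) with hfdef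
    set S : ℕ → Set G := fun k => cyl (2 * (k + 2) + 1) (eVec (2 * k) + eVec (2 * (k + 2)))
      with hSdef
    -- pointwise bound on each S k
    have hpt : ∀ k, k < A - 2 → ∀ x ∈ S k, ((2 : ℝ≥0∞) ^ (2 * k + 1)) ≤ f x := by
      intro k hk x hx
      have h1 : k ≤ A - 3 := by omega
      have h2 : k + 2 ≤ A - 1 := by omega
      have hb := h k (k + 2) h1 le_rfl h2 x hx
      have hsq : Real.sqrt ((4 : ℝ) ^ (k + (k + 2)) / 4) ≤
          Real.sqrt ((q : ℝ) * |fejer q x|) := Real.sqrt_le_sqrt hb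
      have hval : Real.sqrt ((4 : ℝ) ^ (k + (k + 2)) / 4) = 2 ^ (2 * k + 1) := by
        have : (4 : ℝ) ^ (k + (k + 2)) / 4 = ((2 : ℝ) ^ (2 * k + 1)) ^ 2 := by
          rw [show (4:ℝ) = 2^2 by norm_num, ← pow_mul, ← pow_mul,
            div_eq_iff (by positivity : ((2:ℝ)^2) ≠ 0), ← pow_add]
          congr 1
          omega
        rw [this, Real.sqrt_sq (by positivity)]
      calc (2 : ℝ≥0∞) ^ (2 * k + 1) = ENNReal.ofReal ((2:ℝ) ^ (2 * k + 1)) := by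
            rw [ENNReal.ofReal_pow (by norm_num), ENNReal.ofReal_ofNat]
        _ ≤ f x := by
            rw [hfdef]
            exact ENNReal.ofReal_le_ofReal (hval ▸ hsq)
    -- disjointness
    have hdisj : ∀ k k', k < k' → Disjoint (S k) (S k') := by
      intro k k' hkk'
      rw [Set.disjoint_left]
      intro x hx hx'
      have h1 : x (2 * k) = 1 := by
        have := hx (2 * k) (by omega)
        simp only [Pi.add_apply, eVec] at this
        rw [if_neg (by omega : ¬ 2*k = 2*(k+2))] at this
        simpa using this
      have h2 : x (2 * k) = 0 := by
        have := hx' (2 * k) (by omega)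
        simp only [Pi.add_apply, eVec] at this
        rwa [if_neg (by omega : ¬ 2*k = 2*k'), if_neg (by omega : ¬ 2*k = 2*(k'+2)),
          add_zero] at this
      rw [h1] at h2
      exact (by decide : (1 : ZMod 2) ≠ 0) h2
    -- the minorant
    set g : G → ℝ≥0∞ := fun x =>
      ∑ k ∈ Finset.range (A - 2), (S k).indicator (fun _ => (2 : ℝ≥0∞) ^ (2 * k + 1)) x
      with hgdef
    have hgle : ∀ x, g x ≤ f x := by
      intro x
      by_cases hex : ∃ k ∈ Finset.range (A - 2), x ∈ S k
      · obtain ⟨k0, hk0, hxk0⟩ := hex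
        have : g x = (2 : ℝ≥0∞) ^ (2 * k0 + 1) := by
          simp only [hgdef]
          rw [Finset.sum_eq_single k0]
          · simp [Set.indicator_of_mem hxk0]
          · intro b _ hb
            have hdisjb : Disjoint (S b) (S k0) := by
              rcases Nat.lt_or_ge b k0 with hlt | hge
              · exact hdisj b k0 hlt
              · exact (hdisj k0 b (by omega)).symm
            have : x ∉ S b := fun hxb => Set.disjoint_left.mp hdisjb hxb hxk0
            simp [Set.indicator_of_notMem this]
          · intro hk0'
            exact absurd hk0 hk0'
        rw [this]
        exact hpt k0 (Finset.mem_range.mp hk0) x hxk0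
      · have : g x = 0 := by
          rw [hgdef]
          refine Finset.sum_eq_zero fun k hk => ?_
          have : x ∉ S k := fun hxk => hex ⟨k, hk, hxk⟩
          simp [Set.indicator_of_notMem this]
        rw [this]
        exact zero_le
    have hint : ∫⁻ x, g x ∂μG = ∑ k ∈ Finset.range (A - 2),
        (2 : ℝ≥0∞) ^ (2 * k + 1) * μG (S k) := by
      simp only [hgdef]
      rw [lintegral_finset_sum _ (fun k _ =>
        (measurable_const.indicator (measurableSet_cyl _ _)))]
      exact Finset.sum_congr rfl fun k _ => lintegral_indicator_const (measurableSet_cyl _ _) _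
    have hterm : ∀ k, (2 : ℝ≥0∞) ^ (2 * k + 1) * μG (S k) = 16⁻¹ := by
      intro k
      rw [hSdef]
      rw [measure_cyl]
      have hne : ((2:ℝ≥0∞) ^ (2 * k + 1)) ≠ 0 := by positivity
      have hnet : ((2:ℝ≥0∞) ^ (2 * k + 1)) ≠ ⊤ := by
        exact ENNReal.pow_ne_top ENNReal.ofNat_ne_top
      have : (2:ℝ≥0∞)⁻¹ ^ (2 * (k + 2) + 1) = ((2:ℝ≥0∞) ^ (2 * k + 1))⁻¹ * (2^4)⁻¹ := by
        rw [← ENNReal.inv_pow, (by omega : 2 * (k + 2) + 1 = (2 * k + 1) + 4), pow_add,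
          ENNReal.mul_inv (Or.inl (by positivity)) (Or.inl hnet)]
      rw [this, ← mul_assoc, ENNReal.mul_inv_cancel hne hnet, one_mul]
      norm_num
    have hsum : ∑ k ∈ Finset.range (A - 2),
        (2 : ℝ≥0∞) ^ (2 * k + 1) * μG (S k) = (A - 2 : ℕ) * 16⁻¹ := by
      rw [Finset.sum_congr rfl fun k _ => hterm k]
      simp [mul_comm]
    have hfinal : ENNReal.ofReal (1/32 * A) ≤ ((A - 2 : ℕ) : ℝ≥0∞) * 16⁻¹ := by
      have : ((A - 2 : ℕ) : ℝ≥0∞) * 16⁻¹ = ENNReal.ofReal (((A - 2 : ℕ) : ℝ) * (1/16)) := by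
        rw [ENNReal.ofReal_mul (by positivity), ENNReal.ofReal_natCast, one_div,
          ENNReal.ofReal_inv_of_pos (by norm_num), ENNReal.ofReal_ofNat]
      rw [this]
      apply ENNReal.ofReal_le_ofReal
      have hcast : ((A - 2 : ℕ) : ℝ) = (A : ℝ) - 2 := by
        have : (2 : ℕ) ≤ A := by omega
        push_cast [Nat.cast_sub this]
        ring
      rw [hcast]
      have hA5 : (5 : ℝ) ≤ A := by exact_mod_cast hA
      nlinarith
    calc ENNReal.ofReal (1/32 * A) ≤ (A - 2 : ℕ) * 16⁻¹ := hfinal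
      _ = ∫⁻ x, g x ∂μG := by rw [hint, hsum]
      _ ≤ _ := lintegral_mono hgle
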